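/- Let F : ℂ → ℂ be defined by F(z) = 2z if |z| < 1 and F(z) = (2/3)z if |z| ≥ 1. Then the union over all n ≥ 0 of the preimages (F^[n])⁻¹({z : |z| = 1}) of the unit circle under the iterates of F is dense in ℂ. (Equivalently, the pre-discontinuity set of F is the whole Riemann sphere.) -/

import Mathlib

open Complex

/-! Auxiliary development: the radial map `gR r = 2r` for `r < 1`, `(2/3) r` for
`r ≥ 1`, and the set of radii whose orbit hits `1`. -/

noncomputable def gR (r : ℝ) : ℝ := if r < 1 then 2 * r else 2 / 3 * r

def hits1 (r : ℝ) : Prop := ∃ n : ℕ, gR^[n] r = 1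

lemma hits1_one : hits1 1 := ⟨0, rfl⟩

lemma hits1_half {r : ℝ} (h : hits1 r) (h2 : r < 2) : hits1 (r / 2) := by
  obtain ⟨n, hn⟩ := h
  refine ⟨n + 1, ?_⟩
  rw [Function.iterate_succ_apply]
  have hg : gR (r / 2) = r := by
    rw [gR, if_pos (by linarith : r / 2 < 1)]; ring
  rw [hg]; exact hn

lemma hits1_mul {r : ℝ} (h : hits1 r) (h2 : 2 / 3 ≤ r) : hits1 (3 / 2 * r) := by
  obtain ⟨n, hn⟩ := h
  refine ⟨n + 1, ?_⟩
  rw [Function.iterate_succ_apply]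
  have hg : gR (3 / 2 * r) = r := by
    rw [gR, if_neg (by push_neg; linarith : ¬ 3 / 2 * r < 1)]; ring
  rw [hg]; exact hn

lemma pow_ne_aux (q p : ℕ) (hq : q ≠ 0) : (3 / 2 : ℝ) ^ q / 2 ^ p ≠ 1 := by
  intro h
  have h0 : (2 : ℝ) ^ p ≠ 0 := by positivity
  rw [div_eq_one_iff_eq h0, div_pow,
    div_eq_iff (by positivity : (2 : ℝ) ^ q ≠ 0)] at h
  -- h : (3:ℝ)^q = 2^p * 2^q
  have h3 : ((3 ^ q : ℕ) : ℝ) = ((2 ^ (p + q) : ℕ) : ℝ) := by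
    push_cast [pow_add]; linarith
  have h4 : (3 : ℕ) ^ q = 2 ^ (p + q) := by exact_mod_cast h3
  have h5 : (2 : ℕ) ∣ 3 ^ q := h4 ▸ dvd_pow_self 2 (by omega)
  have h6 : (2 : ℕ) ∣ 3 := Nat.Prime.dvd_of_dvd_pow Nat.prime_two h5
  omega

/-- Key structural lemma: every number of the form `(3/2)^q / 2^p` lying in
`(2/3, 3)` has orbit hitting `1`. -/
lemma key : ∀ N q p : ℕ, q + p ≤ N →
    2 / 3 < (3 / 2 : ℝ) ^ q / 2 ^ p → (3 / 2 : ℝ) ^ q / 2 ^ p < 3 →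
    hits1 ((3 / 2 : ℝ) ^ q / 2 ^ p) := by
  intro N
  induction N with
  | zero =>
    intro q p hqp _ _
    have hq : q = 0 := by omega
    have hp : p = 0 := by omega
    subst hq; subst hp
    have h : (3 / 2 : ℝ) ^ 0 / 2 ^ 0 = 1 := by norm_num
    rw [h]
    exact hits1_one
  | succ N ih =>
    intro q p hqp h1 h3
    set r : ℝ := (3 / 2 : ℝ) ^ q / 2 ^ p with hr
    have hrpos : 0 < r := by positivity
    by_cases hcase : r < 1
    · -- must have p ≥ 1; double
      have hp : p ≠ 0 := by
        intro h; subst h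
        have : (1 : ℝ) ≤ (3 / 2 : ℝ) ^ q := one_le_pow₀ (by norm_num)
        simp only [hr, pow_zero, div_one] at hcase
        linarith
      obtain ⟨p', rfl⟩ : ∃ p', p = p' + 1 := ⟨p - 1, by omega⟩
      have hrr : (3 / 2 : ℝ) ^ q / 2 ^ p' = 2 * r := by
        rw [hr, pow_succ]; field_simp
      have h1' : 2 / 3 < (3 / 2 : ℝ) ^ q / 2 ^ p' := by rw [hrr]; linarith
      have h3' : (3 / 2 : ℝ) ^ q / 2 ^ p' < 3 := by rw [hrr]; linarith
      have hS : hits1 (2 * r) := hrr ▸ ih q p' (by omega) h1' h3'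
      have := hits1_half hS (by linarith)
      simpa [mul_div_assoc] using this
    · -- r ≥ 1
      push_neg at hcase
      rcases Nat.eq_zero_or_pos q with hq | hq
      · subst hq
        have hp : p = 0 := by
          by_contra hp
          have h2 : (2 : ℝ) ≤ 2 ^ p := by
            calc (2 : ℝ) = 2 ^ 1 := (pow_one 2).symm
            _ ≤ 2 ^ p := pow_le_pow_right₀ (by norm_num) (by omega)
          have : r ≤ 1 / 2 := by
            rw [hr, pow_zero]
            rw [div_le_div_iff₀ (by positivity) (by norm_num)]
            linarith
          linarith
        subst hp
        have h : r = 1 := by rw [hr]; norm_num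
        rw [h]
        exact hits1_one
      · obtain ⟨q', rfl⟩ : ∃ q', q = q' + 1 := ⟨q - 1, by omega⟩
        have hne : r ≠ 1 := pow_ne_aux (q' + 1) p (by omega)
        have hr1 : 1 < r := lt_of_le_of_ne hcase (Ne.symm hne)
        have hrr : (3 / 2 : ℝ) ^ q' / 2 ^ p = 2 / 3 * r := by
          rw [hr, pow_succ]; field_simp
        have h1' : 2 / 3 < (3 / 2 : ℝ) ^ q' / 2 ^ p := by rw [hrr]; nlinarith
        have h3' : (3 / 2 : ℝ) ^ q' / 2 ^ p < 3 := by rw [hrr]; nlinarith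
        have hS : hits1 (2 / 3 * r) := hrr ▸ ih q' p (by omega) h1' h3'
        have := hits1_mul hS (by nlinarith)
        have heq : 3 / 2 * (2 / 3 * r) = r := by ring
        rwa [heq] at this

lemma irr_alpha : Irrational (Real.logb 2 (3 / 2)) := by
  set α := Real.logb 2 (3 / 2) with hα
  rintro ⟨x, hx⟩
  have h0 : 0 < α := Real.logb_pos (by norm_num) (by norm_num)
  have h1 : α < 1 := by
    have h := Real.logb_lt_logb (b := 2) (by norm_num) (by norm_num : (0:ℝ) < 3/2)
      (by norm_num : (3/2 : ℝ) < 2)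
    simpa using h
  have hx0 : 0 < x := by
    have : (0 : ℝ) < (x : ℝ) := by rw [hx]; exact h0
    exact_mod_cast this
  set m : ℕ := x.num.toNat with hm
  set n : ℕ := x.den with hn
  have hm1 : 1 ≤ m := by
    have := Rat.num_pos.mpr hx0
    omega
  have hn1 : 1 ≤ n := x.pos
  have hmn : (m : ℝ) / (n : ℝ) = α := by
    rw [← hx]
    have : ((x.num : ℚ) / (x.den : ℚ)) = x := Rat.num_div_den x
    rw [← this]
    push_cast
    congr 1
    · congr 1
      have : (x.num.toNat : ℤ) = x.num := Int.toNat_of_nonneg (le_of_lt (Rat.num_pos.mpr hx0))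
      exact_mod_cast this
  have hpow : (2 : ℝ) ^ α = 3 / 2 := Real.rpow_logb (by norm_num) (by norm_num) (by norm_num)
  have hkey : (2 : ℝ) ^ (m : ℕ) = (3 / 2 : ℝ) ^ (n : ℕ) := by
    have e1 : ((2 : ℝ) ^ α) ^ (n : ℕ) = (3 / 2 : ℝ) ^ (n : ℕ) := by rw [hpow]
    rw [← Real.rpow_natCast ((2:ℝ) ^ α) n, ← Real.rpow_mul (by norm_num : (0:ℝ) ≤ 2)] at e1
    have hαn : α * (n : ℝ) = (m : ℝ) := by
      rw [← hmn]; field_simp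
    rw [hαn, Real.rpow_natCast] at e1
    exact e1
  have h2 : (3 : ℝ) ^ n = 2 ^ m * 2 ^ n := by
    have := congrArg (· * (2 : ℝ) ^ n) hkey
    simpa [div_pow, div_mul_eq_mul_div, div_eq_iff (by positivity : (2:ℝ)^n ≠ 0)] using this.symm
  have h3 : ((3 ^ n : ℕ) : ℝ) = ((2 ^ (m + n) : ℕ) : ℝ) := by push_cast [pow_add]; linarith
  have h4 : (3 : ℕ) ^ n = 2 ^ (m + n) := by exact_mod_cast h3
  have h5 : (2 : ℕ) ∣ 3 ^ n := h4 ▸ dvd_pow_self 2 (by omega)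
  have h6 : (2 : ℕ) ∣ 3 := Nat.Prime.dvd_of_dvd_pow Nat.prime_two h5
  omega

lemma toNat_cast_real {x : ℤ} (hx : 0 ≤ x) : ((x.toNat : ℕ) : ℝ) = (x : ℝ) := by
  exact_mod_cast congrArg (fun y : ℤ => (y : ℝ)) (Int.toNat_of_nonneg hx)

/-- small positive elements of `ℕ·α - ℕ`. -/
lemma exists_small {α : ℝ} (hirr : Irrational α) (hα0 : 0 < α) (hα1 : α < 1) :
    ∀ η : ℝ, 0 < η → ∃ Q P : ℕ, 0 < (Q : ℝ) * α - P ∧ (Q : ℝ) * α - P < η := by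
  intro η hη
  set η₀ : ℝ := min η 1 with hη₀
  have hη₀0 : 0 < η₀ := lt_min hη zero_lt_one
  have hη₀η : η₀ ≤ η := min_le_left _ _
  have hη₀1 : η₀ ≤ 1 := min_le_right _ _
  set G : AddSubgroup ℝ := AddSubgroup.closure {1, α} with hG
  have hdense : Dense (G : Set ℝ) := by
    rcases AddSubgroup.dense_or_cyclic G with h | ⟨a, ha⟩
    · exact h
    · exfalso
      have h1 : (1 : ℝ) ∈ G := AddSubgroup.subset_closure (by simp)
      have h2 : α ∈ G := AddSubgroup.subset_closure (by simp)
      rw [ha, AddSubgroup.mem_closure_singleton] at h1 h2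
      obtain ⟨mz, hmz⟩ := h1
      obtain ⟨nz, hnz⟩ := h2
      have hm0 : (mz : ℝ) ≠ 0 := by
        intro h
        have hmz0 : mz = 0 := by exact_mod_cast h
        rw [hmz0] at hmz; simp at hmz
      apply hirr
      refine ⟨(nz : ℚ) / (mz : ℚ), ?_⟩
      have hmz' : (mz : ℝ) * a = 1 := by rw [← zsmul_eq_mul]; exact hmz
      have hnz' : (nz : ℝ) * a = α := by rw [← zsmul_eq_mul]; exact hnz
      have hval : (mz : ℝ) * α = (nz : ℝ) := by
        calc (mz : ℝ) * α = (mz : ℝ) * ((nz : ℝ) * a) := by rw [hnz']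
        _ = (nz : ℝ) * ((mz : ℝ) * a) := by ring
        _ = (nz : ℝ) := by rw [hmz']; ring
      have hcast : (((nz : ℚ) / (mz : ℚ) : ℚ) : ℝ) = (nz : ℝ) / (mz : ℝ) := by push_cast; ring
      rw [hcast, div_eq_iff hm0]
      linear_combination -hval
  obtain ⟨gg, hgG, hgIoo⟩ := hdense.exists_mem_open isOpen_Ioo
    (⟨η₀ / 2, by constructor <;> [linarith; linarith]⟩ : (Set.Ioo (0:ℝ) η₀).Nonempty)
  obtain ⟨hg0, hg1⟩ := hgIoo
  have hg1' : gg < 1 := lt_of_lt_of_le hg1 hη₀1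
  have hgη : gg < η := lt_of_lt_of_le hg1 hη₀η
  -- decompose gg = a + b α
  have hmem : gg ∈ AddSubgroup.closure ({1} ∪ {α} : Set ℝ) := by
    rw [Set.singleton_union]
    exact hgG
  rw [AddSubgroup.closure_union, AddSubgroup.mem_sup] at hmem
  obtain ⟨y, hy, z, hz, hyz⟩ := hmem
  rw [AddSubgroup.mem_closure_singleton] at hy hz
  obtain ⟨a, ha⟩ := hy
  obtain ⟨b, hb⟩ := hz
  have hgeq : gg = (a : ℝ) + (b : ℝ) * α := by
    rw [← hyz, ← ha, ← hb]; push_cast [zsmul_eq_mul]; ring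
  rcases lt_trichotomy b 0 with hb0 | hb0 | hb0
  · -- b < 0 : use 1 - N * gg
    have ha1 : 1 ≤ a := by
      by_contra hc
      push_neg at hc
      have ha0 : (a : ℝ) ≤ 0 := by exact_mod_cast Int.lt_add_one_iff.mp (by omega : a < 0 + 1)
      have hbneg : (b : ℝ) ≤ -1 := by exact_mod_cast Int.le_of_lt_add_one (by omega : b < -1 + 1)
      nlinarith
    have hggirr : Irrational gg := by
      rw [hgeq]
      exact ((hirr.intCast_mul (ne_of_lt hb0)).intCast_add a)
    set N : ℕ := ⌊1 / gg⌋₊ with hN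
    have hNpos : 1 ≤ N := by
      apply Nat.le_floor
      rw [Nat.cast_one, le_div_iff₀ hg0]
      linarith
    have hNle : (N : ℝ) * gg ≤ 1 := by
      have h := Nat.floor_le (by positivity : (0:ℝ) ≤ 1 / gg)
      calc (N : ℝ) * gg ≤ (1 / gg) * gg := by
            apply mul_le_mul_of_nonneg_right _ (le_of_lt hg0)
            exact h
        _ = 1 := by field_simp
    have hNne : (N : ℝ) * gg ≠ 1 := by
      intro h
      apply hggirr
      refine ⟨((N : ℚ))⁻¹, ?_⟩
      have hN0 : (N : ℝ) ≠ 0 := by positivity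
      push_cast
      field_simp
      linarith [h]
    have hNlt : (N : ℝ) * gg < 1 := lt_of_le_of_ne hNle hNne
    have hNlt2 : 1 < ((N : ℝ) + 1) * gg := by
      have h := Nat.lt_floor_add_one (1 / gg)
      rw [div_lt_iff₀ hg0] at h
      linarith
    refine ⟨N * (-b).toNat, (((N : ℤ)) * a - 1).toNat, ?_, ?_⟩
    · have hcast1 : ((N * (-b).toNat : ℕ) : ℝ) = (N : ℝ) * (-(b : ℝ)) := by
        rw [Nat.cast_mul, toNat_cast_real (by omega : (0:ℤ) ≤ -b)]
        push_cast; ring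
      have hcast2 : ((((N : ℤ) * a - 1).toNat : ℕ) : ℝ) = (N : ℝ) * (a : ℝ) - 1 := by
        have hnn : 0 ≤ (N : ℤ) * a - 1 := by
          have : (1 : ℤ) ≤ (N : ℤ) * a := by
            calc (1 : ℤ) = 1 * 1 := by ring
            _ ≤ (N : ℤ) * a := by
                apply mul_le_mul <;> omega
          omega
        rw [toNat_cast_real hnn]
        push_cast; ring
      rw [hcast1, hcast2]
      have : (N : ℝ) * (-(b:ℝ)) * α - ((N:ℝ) * a - 1) = 1 - (N:ℝ) * gg := by
        rw [hgeq]; ring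
      rw [this]
      linarith
    · have hcast1 : ((N * (-b).toNat : ℕ) : ℝ) = (N : ℝ) * (-(b : ℝ)) := by
        rw [Nat.cast_mul, toNat_cast_real (by omega : (0:ℤ) ≤ -b)]
        push_cast; ring
      have hcast2 : ((((N : ℤ) * a - 1).toNat : ℕ) : ℝ) = (N : ℝ) * (a : ℝ) - 1 := by
        have hnn : 0 ≤ (N : ℤ) * a - 1 := by
          have : (1 : ℤ) ≤ (N : ℤ) * a := by
            calc (1 : ℤ) = 1 * 1 := by ring
            _ ≤ (N : ℤ) * a := by
                apply mul_le_mul <;> omega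
          omega
        rw [toNat_cast_real hnn]
        push_cast; ring
      rw [hcast1, hcast2]
      have heq : (N : ℝ) * (-(b:ℝ)) * α - ((N:ℝ) * a - 1) = 1 - (N:ℝ) * gg := by
        rw [hgeq]; ring
      rw [heq]
      have : 1 - (N : ℝ) * gg < gg := by linarith
      linarith
  · -- b = 0 : impossible
    exfalso
    subst hb0
    rw [hgeq] at hg0 hg1'
    simp at hg0 hg1'
    have : 1 ≤ a := by exact_mod_cast hg0
    have : (1 : ℝ) ≤ (a : ℝ) := by exact_mod_cast this
    linarith
  · -- b > 0 : gg itself works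
    have hb1 : (1 : ℝ) ≤ (b : ℝ) := by exact_mod_cast hb0
    have ha0 : a ≤ 0 := by
      by_contra hc
      push_neg at hc
      have : (1 : ℝ) ≤ (a : ℝ) := by exact_mod_cast hc
      nlinarith
    refine ⟨b.toNat, (-a).toNat, ?_, ?_⟩ <;>
    · have hcast1 : ((b.toNat : ℕ) : ℝ) = (b : ℝ) := by
        rw [toNat_cast_real (le_of_lt hb0)]
      have hcast2 : (((-a).toNat : ℕ) : ℝ) = -(a : ℝ) := by
        rw [toNat_cast_real (by omega : (0:ℤ) ≤ -a)]; push_cast; ring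
      rw [hcast1, hcast2]
      have heq : (b : ℝ) * α - (-(a : ℝ)) = gg := by rw [hgeq]; ring
      rw [heq]
      first
        | exact hg0
        | exact hgη

lemma nat_approx {α : ℝ} (hirr : Irrational α) (hα0 : 0 < α) (hα1 : α < 1) :
    ∀ c d : ℝ, 0 ≤ c → c < d → ∃ q p : ℕ, c < (q : ℝ) * α - p ∧ (q : ℝ) * α - p < d := by
  intro c d hc hcd
  obtain ⟨Q, P, hγ0, hγd⟩ := exists_small hirr hα0 hα1 (d - c) (by linarith)
  set γ : ℝ := (Q : ℝ) * α - P with hγ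
  have harch : ∃ n : ℕ, c < (n : ℝ) * γ := by
    obtain ⟨n, hn⟩ := exists_nat_gt (c / γ)
    exact ⟨n, by rwa [div_lt_iff₀ hγ0] at hn⟩
  classical
  set n := Nat.find harch with hn
  have hspec : c < (n : ℝ) * γ := Nat.find_spec harch
  have hn0 : n ≠ 0 := by
    intro h
    rw [h] at hspec
    simp at hspec
    linarith
  have hprev : ¬ c < ((n - 1 : ℕ) : ℝ) * γ := Nat.find_min harch (by omega)
  push_neg at hprev
  have hcast : ((n - 1 : ℕ) : ℝ) = (n : ℝ) - 1 := by
    have : 1 ≤ n := by omega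
    push_cast [Nat.cast_sub this]
    ring
  rw [hcast] at hprev
  have hub : (n : ℝ) * γ < d := by nlinarith
  refine ⟨n * Q, n * P, ?_, ?_⟩ <;>
  · have : ((n * Q : ℕ) : ℝ) * α - ((n * P : ℕ) : ℝ) = (n : ℝ) * γ := by
      push_cast; rw [hγ]; ring
    rw [this]
    first
      | exact hspec
      | exact hub

/-- Core density: in every interval `(x, x+δ)` with `1 ≤ x < 2` there is a
radius whose orbit hits 1, and it can be taken `< 2`. -/
lemma core (x : ℝ) (hx1 : 1 ≤ x) (hx2 : x < 2) (δ : ℝ) (hδ : 0 < δ) :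
    ∃ r : ℝ, hits1 r ∧ x < r ∧ r < x + δ ∧ r < 2 := by
  set α := Real.logb 2 (3 / 2) with hα
  have hα0 : 0 < α := Real.logb_pos (by norm_num) (by norm_num)
  have hα1 : α < 1 := by
    have h := Real.logb_lt_logb (b := 2) (by norm_num) (by norm_num : (0:ℝ) < 3/2)
      (by norm_num : (3/2 : ℝ) < 2)
    simpa using h
  set y : ℝ := min (x + δ) 2 with hy
  have hxy : x < y := lt_min (by linarith) hx2
  have hy2 : y ≤ 2 := min_le_right _ _
  have hyδ : y ≤ x + δ := min_le_left _ _
  have hc : 0 ≤ Real.logb 2 x := Real.logb_nonneg (by norm_num) hx1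
  have hcd : Real.logb 2 x < Real.logb 2 y :=
    Real.logb_lt_logb (by norm_num) (by linarith) hxy
  obtain ⟨q, p, h1, h2⟩ := nat_approx irr_alpha hα0 hα1 (Real.logb 2 x) (Real.logb 2 y) hc hcd
  set r : ℝ := (3 / 2 : ℝ) ^ q / 2 ^ p with hr
  have hrpos : 0 < r := by positivity
  have hlogr : Real.logb 2 r = (q : ℝ) * α - p := by
    rw [hr, Real.logb_div (by positivity) (by positivity), Real.logb_pow, Real.logb_pow]
    simp [Real.logb_self_eq_one, hα]
  have hxr : x < r := by
    have hlt : Real.logb 2 x < Real.logb 2 r := by rw [hlogr]; exact h1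
    exact (Real.logb_lt_logb_iff (by norm_num) (by linarith) hrpos).mp hlt
  have hry : r < y := by
    have hlt : Real.logb 2 r < Real.logb 2 y := by rw [hlogr]; exact h2
    exact (Real.logb_lt_logb_iff (by norm_num) hrpos (by linarith)).mp hlt
  refine ⟨r, ?_, hxr, by linarith, by linarith⟩
  exact key (q + p) q p le_rfl (by rw [← hr]; linarith) (by rw [← hr]; linarith)

lemma scale_down {r : ℝ} (h : hits1 r) (h0 : 0 < r) (h2 : r < 2) (k : ℕ) :
    hits1 (r / 2 ^ k) := by
  induction k with
  | zero => simpa using h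
  | succ k ih =>
    have hle : r / 2 ^ k ≤ r := by
      apply div_le_self (le_of_lt h0)
      exact one_le_pow₀ (by norm_num)
    have := hits1_half ih (by linarith)
    have heq : r / 2 ^ k / 2 = r / 2 ^ (k + 1) := by
      rw [pow_succ]; ring
    rwa [heq] at this

lemma scale_up {r : ℝ} (h : hits1 r) (h23 : 2 / 3 ≤ r) (k : ℕ) :
    hits1 ((3 / 2 : ℝ) ^ k * r) := by
  induction k with
  | zero => simpa using h
  | succ k ih =>
    have hge : r ≤ (3 / 2 : ℝ) ^ k * r := by
      apply le_mul_of_one_le_left (by linarith)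
      exact one_le_pow₀ (by norm_num)
    have := hits1_mul ih (by linarith)
    have heq : 3 / 2 * ((3 / 2 : ℝ) ^ k * r) = (3 / 2 : ℝ) ^ (k + 1) * r := by
      rw [pow_succ]; ring
    rwa [heq] at this

lemma radial_dense (x : ℝ) (hx : 0 ≤ x) (ε : ℝ) (hε : 0 < ε) :
    ∃ r : ℝ, 0 < r ∧ hits1 r ∧ |r - x| < ε := by
  set t : ℝ := x + ε / 2 with ht
  clear_value t
  have ht0 : 0 < t := by linarith
  suffices h : ∃ r : ℝ, hits1 r ∧ t < r ∧ r < t + ε / 2 by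
    obtain ⟨r, hS, hlo, hhi⟩ := h
    refine ⟨r, by linarith, hS, ?_⟩
    rw [abs_lt]
    constructor <;> [linarith; linarith]
  rcases lt_or_ge t 2 with htlt | htge
  · -- scale up into [1,2) by powers of 2
    obtain ⟨nz, hmem⟩ := exists_mem_Ico_zpow ht0 (one_lt_two : (1:ℝ) < 2)
    obtain ⟨hlo, hhi⟩ := hmem
    have hnz0 : nz ≤ 0 := by
      by_contra hc
      push_neg at hc
      have : (2 : ℝ) ≤ (2 : ℝ) ^ nz := by
        calc (2 : ℝ) = (2 : ℝ) ^ (1 : ℤ) := by norm_num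
        _ ≤ (2 : ℝ) ^ nz := by
            apply zpow_le_zpow_right₀ (by norm_num)
            omega
      linarith
    set k : ℕ := (-nz).toNat with hk
    have hkz : (2 : ℝ) ^ (k : ℕ) * (2 : ℝ) ^ nz = 1 := by
      rw [← zpow_natCast (2 : ℝ) k, ← zpow_add₀ (by norm_num : (2:ℝ) ≠ 0)]
      have : (k : ℤ) + nz = 0 := by
        rw [hk]; omega
      rw [this, zpow_zero]
    have h2k : (0 : ℝ) < 2 ^ k := by positivity
    set xx : ℝ := 2 ^ k * t with hxx
    clear_value xx
    have hxx1 : 1 ≤ xx := by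
      rw [hxx]
      calc (1 : ℝ) = 2 ^ k * (2:ℝ) ^ nz := hkz.symm
      _ ≤ 2 ^ k * t := by
          apply mul_le_mul_of_nonneg_left hlo (le_of_lt h2k)
    have hxx2 : xx < 2 := by
      rw [hxx]
      have h2nz : (2:ℝ) ^ (nz + 1) = 2 * 2 ^ nz := by
        rw [zpow_add_one₀ (by norm_num : (2:ℝ) ≠ 0)]; ring
      rw [h2nz] at hhi
      calc 2 ^ k * t < 2 ^ k * (2 * 2 ^ nz) := by
            apply mul_lt_mul_of_pos_left hhi h2k
      _ = 2 * (2 ^ k * (2:ℝ) ^ nz) := by ring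
      _ = 2 := by rw [hkz]; ring
    obtain ⟨r', hS', hr'lo, hr'hi, hr'2⟩ := core xx hxx1 hxx2 (2 ^ k * (ε / 2)) (by positivity)
    refine ⟨r' / 2 ^ k, scale_down hS' (by linarith) hr'2 k, ?_, ?_⟩
    · rw [lt_div_iff₀ h2k]
      calc t * 2 ^ k = xx := by rw [hxx]; ring
      _ < r' := hr'lo
    · rw [div_lt_iff₀ h2k]
      calc r' < xx + 2 ^ k * (ε / 2) := hr'hi
      _ = (t + ε / 2) * 2 ^ k := by rw [hxx]; ring
  · -- t ≥ 2 : scale up by powers of 3/2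
    obtain ⟨nz, hmem⟩ := exists_mem_Ico_zpow ht0 (by norm_num : (1:ℝ) < 3 / 2)
    obtain ⟨hlo, hhi⟩ := hmem
    have hnz0 : 0 ≤ nz := by
      by_contra hc
      push_neg at hc
      have h1 : (3 / 2 : ℝ) ^ (nz + 1) ≤ (3 / 2 : ℝ) ^ (0 : ℤ) := by
        apply zpow_le_zpow_right₀ (by norm_num)
        omega
      simp at h1
      linarith
    set m : ℕ := nz.toNat with hm
    have hmz : (3 / 2 : ℝ) ^ (m : ℕ) = (3 / 2 : ℝ) ^ nz := by
      rw [← zpow_natCast (3 / 2 : ℝ) m]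
      congr 1
      rw [hm]; omega
    have hu0 : (0 : ℝ) < (3 / 2 : ℝ) ^ m := by positivity
    set xx : ℝ := t / (3 / 2) ^ m with hxx
    clear_value xx
    have hxx1 : 1 ≤ xx := by
      rw [hxx, le_div_iff₀ hu0, one_mul, hmz]
      exact hlo
    have hxx2 : xx < 3 / 2 := by
      rw [hxx, div_lt_iff₀ hu0]
      have h2nz : (3/2:ℝ) ^ (nz + 1) = 3 / 2 * (3/2) ^ nz := by
        rw [zpow_add_one₀ (by norm_num : (3/2:ℝ) ≠ 0)]; ring
      rw [h2nz] at hhi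
      rw [hmz]
      linarith
    obtain ⟨r', hS', hr'lo, hr'hi, hr'2⟩ := core xx hxx1 (by linarith) ((ε / 2) / (3/2) ^ m)
      (by positivity)
    refine ⟨(3/2) ^ m * r', scale_up hS' (by linarith) m, ?_, ?_⟩
    · calc t = (3/2) ^ m * xx := by rw [hxx]; field_simp
      _ < (3/2) ^ m * r' := by apply mul_lt_mul_of_pos_left hr'lo hu0
    · calc (3/2:ℝ) ^ m * r' < (3/2) ^ m * (xx + (ε / 2) / (3/2) ^ m) := by
            apply mul_lt_mul_of_pos_left hr'hi hu0
      _ = t + ε / 2 := by rw [hxx]; field_simp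

/-- Section 2.6: for the piecewise conformal map `F(z) = 2z` for `|z| < 1`,
`F(z) = (2/3)z` for `|z| ≥ 1`, the union of the preimages of the unit circle
under all iterates of `F` is dense in `ℂ`; equivalently, the
pre-discontinuity set of `F` is the whole Riemann sphere. -/
theorem preDiscontinuity_eq_whole_sphere
    (F : ℂ → ℂ)
    (hF : ∀ z : ℂ, F z = if ‖z‖ < 1 then 2 * z else (2 / 3) * z) :
    Dense (⋃ n : ℕ, (F^[n]) ⁻¹' {z : ℂ | ‖z‖ = 1}) := by
  have habsF : ∀ w : ℂ, ‖F w‖ = gR ‖w‖ := by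
    intro w
    rw [hF w, gR]
    split_ifs with h
    · simp [norm_mul]
    · rw [norm_mul]
      congr 1
      rw [norm_div]
      simp
  have hiter : ∀ (n : ℕ) (w : ℂ), ‖F^[n] w‖ = gR^[n] ‖w‖ := by
    intro n
    induction n with
    | zero => intro w; simp
    | succ n ih =>
      intro w
      rw [Function.iterate_succ_apply', Function.iterate_succ_apply', habsF, ih]
  rw [Metric.dense_iff]
  intro z ε hε
  obtain ⟨r, hr0, ⟨n, hn⟩, hrx⟩ := radial_dense ‖z‖ (norm_nonneg z) ε hε
  by_cases hz : z = 0
  · subst hz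
    refine ⟨(r : ℂ), ?_, ?_⟩
    · rw [Metric.mem_ball, Complex.dist_eq]
      simp only [sub_zero, Complex.norm_real, Real.norm_eq_abs]
      rw [abs_of_pos hr0]
      simpa [abs_of_pos hr0] using hrx
    · rw [Set.mem_iUnion]
      refine ⟨n, ?_⟩
      simp only [Set.mem_preimage, Set.mem_setOf_eq]
      rw [hiter n, Complex.norm_real, Real.norm_eq_abs, abs_of_pos hr0]
      exact hn
  · set a : ℝ := ‖z‖ with haz
    have ha : 0 < a := norm_pos_iff.mpr hz
    set w : ℂ := ((r / a : ℝ) : ℂ) * z with hw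
    have habsw : ‖w‖ = r := by
      rw [hw, norm_mul, Complex.norm_real, Real.norm_eq_abs, abs_of_pos (by positivity : 0 < r / a), ← haz]
      field_simp
    refine ⟨w, ?_, ?_⟩
    · rw [Metric.mem_ball, Complex.dist_eq]
      have hwz : w - z = (((r - a) / a : ℝ) : ℂ) * z := by
        rw [hw]
        have hane : (a : ℂ) ≠ 0 := Complex.ofReal_ne_zero.mpr (ne_of_gt ha)
        push_cast
        field_simp
      rw [hwz, norm_mul, Complex.norm_real, Real.norm_eq_abs, ← haz]
      rw [abs_div, abs_of_pos ha]
      rw [div_mul_cancel₀ _ (ne_of_gt ha)]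
      exact hrx
    · rw [Set.mem_iUnion]
      refine ⟨n, ?_⟩
      simp only [Set.mem_preimage, Set.mem_setOf_eq]
      rw [hiter n, habsw]
      exact hn
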